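/- Let h : X → (0, M] be strongly star quasiconvex with modulus γ ≥ 0 with respect to a minimizer x̄, where M > 0. Then ln ∘ h is strongly star quasiconvex with modulus γ/M with respect to x̄. -/

import Mathlib

theorem stmt_15 {n : ℕ} (X : Set (EuclideanSpace ℝ (Fin n))) (hX : Convex ℝ X)
    (h : EuclideanSpace ℝ (Fin n) → ℝ) (M γ : ℝ) (hM : 0 < M) (hγ : 0 ≤ γ)
    (hbd : ∀ x ∈ X, 0 < h x ∧ h x ≤ M)
    (xbar : EuclideanSpace ℝ (Fin n)) (hxbar : xbar ∈ X)
    (hmin : ∀ y ∈ X, h xbar ≤ h y)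
    (hstar : ∀ y ∈ X, ∀ l ∈ Set.Icc (0:ℝ) 1,
      h (l • xbar + (1 - l) • y) ≤ h y - l * (1 - l) * (γ / 2) * ‖y - xbar‖ ^ 2) :
    ∀ y ∈ X, ∀ l ∈ Set.Icc (0:ℝ) 1,
      Real.log (h (l • xbar + (1 - l) • y)) ≤
        Real.log (h y) - l * (1 - l) * ((γ / M) / 2) * ‖y - xbar‖ ^ 2 := by
  intro y hy l hl
  obtain ⟨hl0, hl1⟩ := hl
  have hz : l • xbar + (1 - l) • y ∈ X := hX hxbar hy hl0 (by linarith) (by ring)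
  set c := l * (1 - l) * (γ / 2) * ‖y - xbar‖ ^ 2 with hc
  have hc0 : 0 ≤ c := by
    apply mul_nonneg
    apply mul_nonneg
    apply mul_nonneg hl0 (by linarith)
    positivity
    positivity
  have hzpos := (hbd _ hz).1
  have hypos := (hbd y hy).1
  have hyM := (hbd y hy).2
  have hle : h (l • xbar + (1 - l) • y) ≤ h y - c := hstar y hy l ⟨hl0, hl1⟩
  have hyc : 0 < h y - c := lt_of_lt_of_le hzpos hle
  have h1 : Real.log (h (l • xbar + (1 - l) • y)) ≤ Real.log (h y - c) :=
    Real.log_le_log hzpos hle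
  have h2 : Real.log (h y - c) - Real.log (h y) ≤ -(c / h y) := by
    have hq := Real.log_le_sub_one_of_pos (show 0 < (h y - c) / h y by positivity)
    rw [Real.log_div (ne_of_gt hyc) (ne_of_gt hypos)] at hq
    have hkey : (h y - c) / h y - 1 = -(c / h y) := by field_simp; ring
    linarith
  have h3 : c / M ≤ c / h y :=
    div_le_div_of_nonneg_left hc0 hypos hyM
  have h4 : l * (1 - l) * ((γ / M) / 2) * ‖y - xbar‖ ^ 2 = c / M := by
    rw [hc]; ring
  linarith
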